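/- Consider online linear losses ℓ_t(z) = -∇_tᵀ z with ‖∇_t‖ ≤ M, and projected gradient ascent iterates x̃_{t+1} = Π_S(x̃_t + γ∇_t) on a convex compact set S ⊆ ℝ^d containing 0 with diameter at most D, starting at x̃_1 = 0. Then for any comparator sequence y_1, ..., y_T ∈ S, Σ_{t=1}^{T} ∇_tᵀ(y_t - x̃_t) ≤ D²/(2γ) + (D/γ)·(P(y_{1:T}) + D) + (γ/2)·M²·T, where P(y_{1:T}) = Σ_{t=1}^{T-1} ‖y_t - y_{t+1}‖. -/

import Mathlib

open Finset
open scoped RealInnerProductSpace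

/-- Dynamic regret of projected online gradient ascent: with step size `γ > 0`,
gradients `‖∇_t‖ ≤ M`, iterates `x_{t+1} = Π_S(x_t + γ ∇_t)` started at `x_0 = 0` on
a convex compact set `S ∋ 0` of diameter at most `D`, for any comparator sequence
`y_t ∈ S`,
`Σ_{t<T} ∇_tᵀ(y_t - x_t) ≤ D²/(2γ) + (D/γ)(P(y) + D) + (γ/2) M² T`,
where `P(y) = Σ_{t<T-1} ‖y_t - y_{t+1}‖` is the path length. -/
theorem ogd_dynamic_regret (d T : ℕ) (γ M D : ℝ) (hγ : 0 < γ) (hM : 0 ≤ M)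
    (S : Set (EuclideanSpace ℝ (Fin d))) (hSconv : Convex ℝ S)
    (hScomp : IsCompact S) (h0S : (0 : EuclideanSpace ℝ (Fin d)) ∈ S)
    (hD : ∀ a ∈ S, ∀ b ∈ S, ‖a - b‖ ≤ D)
    (grad : ℕ → EuclideanSpace ℝ (Fin d)) (hgrad : ∀ t, ‖grad t‖ ≤ M)
    (x : ℕ → EuclideanSpace ℝ (Fin d)) (hx0 : x 0 = 0)
    (hxS : ∀ t, x t ∈ S)
    (hproj : ∀ t, ∀ z ∈ S,
      ‖x (t + 1) - (x t + γ • grad t)‖ ≤ ‖z - (x t + γ • grad t)‖)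
    (y : ℕ → EuclideanSpace ℝ (Fin d)) (hy : ∀ t, y t ∈ S) :
    ∑ t ∈ Finset.range T, (inner ℝ (grad t) (y t - x t) : ℝ) ≤
      D ^ 2 / (2 * γ) +
        (D / γ) * ((∑ t ∈ Finset.range (T - 1), ‖y t - y (t + 1)‖) + D) +
        γ / 2 * M ^ 2 * T := by
  have hD0 : (0:ℝ) ≤ D := by simpa using hD 0 h0S 0 h0S
  -- obtuse angle property of the projection
  have hobtuse : ∀ t, ∀ z ∈ S,
      (inner ℝ ((x t + γ • grad t) - x (t+1)) (z - x (t+1)) : ℝ) ≤ 0 := by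
    intro t z hz
    haveI : Nonempty S := ⟨⟨0, h0S⟩⟩
    have hbdd : BddBelow (Set.range fun w : S =>
        ‖(x t + γ • grad t) - (w : EuclideanSpace ℝ (Fin d))‖) := by
      refine ⟨0, ?_⟩
      rintro r ⟨w, rfl⟩
      exact norm_nonneg _
    have hmin : ‖(x t + γ • grad t) - x (t+1)‖ = ⨅ w : S, ‖(x t + γ • grad t) - w‖ := by
      refine le_antisymm (le_ciInf fun w => ?_) ?_
      · have h := hproj t w w.2
        rw [norm_sub_rev, norm_sub_rev (w : EuclideanSpace ℝ (Fin d))] at h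
        exact h
      · exact ciInf_le hbdd (⟨x (t+1), hxS (t+1)⟩ : S)
    exact (norm_eq_iInf_iff_real_inner_le_zero hSconv (hxS (t+1))).1 hmin z hz
  -- per-step inequality
  have hstep : ∀ t, 2*γ * (inner ℝ (grad t) (y t - x t) : ℝ) ≤
      ‖y t - x t‖^2 - ‖y t - x (t+1)‖^2 + γ^2 * M^2 := by
    intro t
    have h1 : ‖(y t - x t) - γ • grad t‖^2
        = ‖y t - x t‖^2 - 2*γ*(inner ℝ (grad t) (y t - x t) : ℝ) + γ^2*‖grad t‖^2 := by
      rw [norm_sub_sq_real, real_inner_smul_right, real_inner_comm, norm_smul]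
      rw [Real.norm_eq_abs, mul_pow, sq_abs]
      ring
    have h2 : ‖y t - x (t+1)‖^2 ≤ ‖(y t - x t) - γ • grad t‖^2 := by
      have hvec : (y t - x t) - γ • grad t
          = (y t - x (t+1)) - ((x t + γ • grad t) - x (t+1)) := by abel
      rw [hvec]
      conv_rhs => rw [norm_sub_sq_real]
      have hobt := hobtuse t (y t) (hy t)
      rw [real_inner_comm] at hobt
      linarith [sq_nonneg ‖(x t + γ • grad t) - x (t+1)‖]
    have h3 : γ^2*‖grad t‖^2 ≤ γ^2*M^2 :=
      mul_le_mul_of_nonneg_left (pow_le_pow_left₀ (norm_nonneg _) (hgrad t) 2) (sq_nonneg γ)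
    linarith
  -- cross term bound
  have hcross : ∀ i, ‖y (i+1) - x (i+1)‖^2 - ‖y i - x (i+1)‖^2
      ≤ 2*D*‖y i - y (i+1)‖ := by
    intro i
    have ha : ‖y (i+1) - x (i+1)‖ ≤ D := hD _ (hy _) _ (hxS _)
    have hb : ‖y i - x (i+1)‖ ≤ D := hD _ (hy _) _ (hxS _)
    have hab : ‖y (i+1) - x (i+1)‖ - ‖y i - x (i+1)‖ ≤ ‖y i - y (i+1)‖ := by
      have h := norm_sub_norm_le (y (i+1) - x (i+1)) (y i - x (i+1))
      have h' : (y (i+1) - x (i+1)) - (y i - x (i+1)) = y (i+1) - y i := by abel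
      rw [h', norm_sub_rev (y (i+1)) (y i)] at h
      exact h
    nlinarith [norm_nonneg (y i - x (i+1)), norm_nonneg (y (i+1) - x (i+1)),
      norm_nonneg (y i - y (i+1))]
  -- telescoping bound
  have htel : ∑ t ∈ range T, (‖y t - x t‖^2 - ‖y t - x (t+1)‖^2)
      ≤ D^2 + 2*D*∑ t ∈ range (T-1), ‖y t - y (t+1)‖ := by
    cases T with
    | zero => simp; positivity
    | succ n =>
      have hsplit : ∑ t ∈ range (n+1), (‖y t - x t‖^2 - ‖y t - x (t+1)‖^2)
          = (∑ i ∈ range n, (‖y (i+1) - x (i+1)‖^2 - ‖y i - x (i+1)‖^2))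
            + ‖y 0 - x 0‖^2 - ‖y n - x (n+1)‖^2 := by
        rw [Finset.sum_sub_distrib,
          Finset.sum_range_succ' (fun t => ‖y t - x t‖^2),
          Finset.sum_range_succ (fun t => ‖y t - x (t+1)‖^2),
          Finset.sum_sub_distrib]
        ring
      have hA0 : ‖y 0 - x 0‖^2 ≤ D^2 := by
        rw [hx0]
        exact pow_le_pow_left₀ (norm_nonneg _) (hD _ (hy 0) 0 h0S) 2
      have hsum1 : ∑ i ∈ range n, (‖y (i+1) - x (i+1)‖^2 - ‖y i - x (i+1)‖^2)
          ≤ 2*D*∑ i ∈ range n, ‖y i - y (i+1)‖ := by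
        rw [Finset.mul_sum]
        exact Finset.sum_le_sum fun i _ => hcross i
      simp only [Nat.add_sub_cancel]
      have hBn : (0:ℝ) ≤ ‖y n - x (n+1)‖^2 := sq_nonneg _
      linarith [hsplit.le, hsplit.ge]
  -- combine
  set P := ∑ t ∈ Finset.range (T-1), ‖y t - y (t+1)‖ with hP
  have hP0 : 0 ≤ P := Finset.sum_nonneg fun _ _ => norm_nonneg _
  have hsumstep : 2*γ * ∑ t ∈ Finset.range T, (inner ℝ (grad t) (y t - x t) : ℝ)
      ≤ D^2 + 2*D*P + γ^2*M^2*T := by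
    rw [Finset.mul_sum]
    calc ∑ t ∈ range T, 2*γ*(inner ℝ (grad t) (y t - x t) : ℝ)
        ≤ ∑ t ∈ range T, (‖y t - x t‖^2 - ‖y t - x (t+1)‖^2 + γ^2*M^2) :=
          Finset.sum_le_sum fun t _ => hstep t
      _ = (∑ t ∈ range T, (‖y t - x t‖^2 - ‖y t - x (t+1)‖^2)) + T*(γ^2*M^2) := by
          rw [Finset.sum_add_distrib, Finset.sum_const, Finset.card_range, nsmul_eq_mul]
      _ ≤ D^2 + 2*D*P + γ^2*M^2*T := by linarith [htel]
  have h2γ : (0:ℝ) < 2*γ := by linarith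
  rw [← mul_le_mul_iff_of_pos_left h2γ]
  have hRHS : 2*γ*(D^2/(2*γ) + (D/γ)*(P + D) + γ/2*M^2*T)
      = D^2 + 2*D*P + 2*D^2 + γ^2*M^2*(T:ℝ) := by
    field_simp
    ring
  rw [hRHS]
  nlinarith [hsumstep, sq_nonneg D]
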